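/- If the tokenization of a string S decomposes as F(S) = A ++ B (a concatenation of two lists of tokens), then F(S) = F(join A) ++ F(join B); that is, tokenizing the two pieces of S obtained by cutting at any token boundary of F(S) and concatenating the results reproduces F(S). -/

import Mathlib

variable {α : Type*} [DecidableEq α]

/-- The longest nonempty prefix of `S` belonging to the vocabulary `V`
(falling back to the first character of `S` if no such prefix exists). -/
noncomputable def firstTok (V : Finset (List α)) (S : List α) : List α :=
  ((V.filter (fun w => w ≠ [] ∧ w <+: S)).toList.argmax List.length).getD (S.take 1)

lemma firstTok_ne_nil (V : Finset (List α)) (a : α) (s : List α) :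
    firstTok V (a :: s) ≠ [] := by
  unfold firstTok
  cases h : ((V.filter (fun w => w ≠ [] ∧ w <+: (a :: s))).toList.argmax List.length) with
  | none => simp
  | some w =>
    have hw : w ∈ (V.filter (fun w => w ≠ [] ∧ w <+: (a :: s))).toList :=
      List.argmax_mem h
    rw [Finset.mem_toList, Finset.mem_filter] at hw
    simpa using hw.2.1

/-- Greedy (WordPiece-style) tokenization with vocabulary `V`. -/
noncomputable def F (V : Finset (List α)) : List α → List (List α)
  | [] => []
  | a :: s =>
    firstTok V (a :: s) :: F V ((a :: s).drop (firstTok V (a :: s)).length)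
termination_by S => S.length
decreasing_by
  have h := firstTok_ne_nil V a s
  have hpos : 0 < (firstTok V (a :: s)).length := List.length_pos_iff.mpr h
  simp only [List.length_drop, List.length_cons]
  omega

lemma firstTok_spec (V : Finset (List α)) (hsingle : ∀ a : α, [a] ∈ V)
    (a : α) (s : List α) :
    firstTok V (a :: s) ∈ V ∧ firstTok V (a :: s) <+: (a :: s) ∧
    ∀ w ∈ V, w ≠ [] → w <+: (a :: s) → w.length ≤ (firstTok V (a :: s)).length := by
  unfold firstTok
  cases h : ((V.filter (fun w => w ≠ [] ∧ w <+: (a :: s))).toList.argmax List.length) with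
  | none =>
    exfalso
    rw [List.argmax_eq_none, Finset.toList_eq_nil, Finset.filter_eq_empty_iff] at h
    exact h (hsingle a) ⟨by simp, ⟨s, rfl⟩⟩
  | some w =>
    have hw : w ∈ (V.filter (fun w => w ≠ [] ∧ w <+: (a :: s))).toList :=
      List.argmax_mem h
    rw [Finset.mem_toList, Finset.mem_filter] at hw
    refine ⟨hw.1, hw.2.2, ?_⟩
    intro u hu hune hupre
    have : u ∈ (V.filter (fun w => w ≠ [] ∧ w <+: (a :: s))).toList := by
      rw [Finset.mem_toList, Finset.mem_filter]; exact ⟨hu, hune, hupre⟩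
    exact List.le_of_mem_argmax this h

lemma F_cons (V : Finset (List α)) (a : α) (s : List α) :
    F V (a :: s) =
      firstTok V (a :: s) :: F V ((a :: s).drop (firstTok V (a :: s)).length) := by
  rw [F]

lemma F_eq_of_ne_nil (V : Finset (List α)) {S : List α} (hS : S ≠ []) :
    F V S = firstTok V S :: F V (S.drop (firstTok V S).length) := by
  cases S with
  | nil => exact absurd rfl hS
  | cons a s => exact F_cons V a s

lemma join_nil' : (([] : List (List α))).flatten = [] := rfl

lemma join_cons' (l : List α) (L : List (List α)) : (l :: L).flatten = l ++ L.flatten := rfl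

lemma join_append' (L M : List (List α)) : (L ++ M).flatten = L.flatten ++ M.flatten := by
  induction L with
  | nil => simp [join_nil', join_cons']
  | cons l L ih => simp [join_cons', ih, List.append_assoc]

lemma F_nil (V : Finset (List α)) : F V ([] : List α) = [] := by
  rw [F]

lemma join_F_aux (V : Finset (List α)) (hsingle : ∀ a : α, [a] ∈ V) :
    ∀ n (S : List α), S.length ≤ n → (F V S).flatten = S := by
  intro n
  induction n with
  | zero =>
    intro S h
    have : S = [] := List.length_eq_zero_iff.mp (Nat.le_zero.mp h)
    subst this; simp [F_nil]
  | succ n ih =>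
    intro S h
    cases S with
    | nil => simp [F_nil]
    | cons a s =>
      rw [F_cons]
      set t := firstTok V (a :: s) with ht
      have htne : t ≠ [] := firstTok_ne_nil V a s
      have hpre : t <+: (a :: s) := (firstTok_spec V hsingle a s).2.1
      obtain ⟨r, hr⟩ := hpre
      have hdrop : (a :: s).drop t.length = r := by
        rw [← hr, List.drop_left]
      have hlen : ((a :: s).drop t.length).length ≤ n := by
        have : 0 < t.length := List.length_pos_iff.mpr htne
        simp only [List.length_drop, List.length_cons]
        simp only [List.length_cons] at h
        omega
      rw [join_cons', ih _ hlen, hdrop, hr]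

lemma join_F (V : Finset (List α)) (hsingle : ∀ a : α, [a] ∈ V)
    (S : List α) : (F V S).flatten = S :=
  join_F_aux V hsingle S.length S le_rfl

/-- If `t` is the first token of `S` and `t ++ r` is a prefix of `S`,
then `t` is also the first token of `t ++ r`. -/
lemma firstTok_stable (V : Finset (List α)) (hsingle : ∀ a : α, [a] ∈ V)
    {a : α} {s : List α} {r : List α}
    (hpre : firstTok V (a :: s) ++ r <+: (a :: s)) :
    firstTok V (firstTok V (a :: s) ++ r) = firstTok V (a :: s) := by
  set t := firstTok V (a :: s) with ht
  have htne : t ≠ [] := firstTok_ne_nil V a s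
  obtain ⟨b, t', hbt⟩ := List.exists_cons_of_ne_nil htne
  have hspec := firstTok_spec V hsingle a s
  -- t ++ r = b :: (t' ++ r)
  have htr : t ++ r = b :: (t' ++ r) := by rw [hbt]; simp
  have hspec' := firstTok_spec V hsingle b (t' ++ r)
  rw [← htr] at hspec'
  set u := firstTok V (t ++ r) with hu
  -- u is a prefix of t ++ r, hence of a :: s
  have hupre : u <+: (a :: s) := hspec'.2.1.trans hpre
  have hune : u ≠ [] := by
    show firstTok V (t ++ r) ≠ []
    rw [htr]; exact firstTok_ne_nil V b (t' ++ r)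
  -- length u ≤ length t
  have h1 : u.length ≤ t.length := hspec.2.2 u hspec'.1 hune hupre
  -- length t ≤ length u : t ∈ V, t ≠ [], t <+: t ++ r
  have h2 : t.length ≤ u.length :=
    hspec'.2.2 t hspec.1 htne (List.prefix_append t r)
  -- both u and t are prefixes of t ++ r with equal length
  have heq : u.length = t.length := le_antisymm h1 h2
  have htpre : t <+: t ++ r := List.prefix_append t r
  have : u <+: t := List.prefix_of_prefix_length_le hspec'.2.1 htpre h1
  exact this.eq_of_length heq

/-- If `t` is the first token of `S` and `t ++ r <+: S`, then
`F V (t ++ r) = t :: F V r`. -/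
lemma F_append_first (V : Finset (List α)) (hsingle : ∀ a : α, [a] ∈ V)
    {a : α} {s : List α} {r : List α}
    (hpre : firstTok V (a :: s) ++ r <+: (a :: s)) :
    F V (firstTok V (a :: s) ++ r) = firstTok V (a :: s) :: F V r := by
  set t := firstTok V (a :: s) with ht
  have htne : t ≠ [] := firstTok_ne_nil V a s
  have hne : t ++ r ≠ [] := by
    intro hc
    exact htne (List.append_eq_nil_iff.mp hc).1
  rw [F_eq_of_ne_nil V hne, firstTok_stable V hsingle hpre, List.drop_left]

/-- cutting `S` at any token boundary of `F V S` and tokenizing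
the two pieces separately reproduces `F V S`. -/
theorem tokenize_split_at_boundary (V : Finset (List α))
    (hne : ∀ w ∈ V, w ≠ []) (hsingle : ∀ a : α, [a] ∈ V)
    (S : List α) (A B : List (List α)) (h : F V S = A ++ B) :
    F V S = F V A.flatten ++ F V B.flatten := by
  induction A generalizing S with
  | nil =>
    simp only [List.nil_append] at h
    subst h
    rw [join_nil', F_nil, List.nil_append, join_F V hsingle]
  | cons t' A' ih =>
    cases S with
    | nil => rw [F_nil] at h; exact absurd h.symm (by simp)
    | cons a s =>
      rw [F_cons] at h
      set t := firstTok V (a :: s) with ht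
      set d := (a :: s).drop t.length with hd
      obtain ⟨ht', hrest⟩ : t' = t ∧ F V d = A' ++ B := by
        have := h.symm
        rw [List.cons_append] at h
        exact ⟨(List.cons.injEq _ _ _ _ ▸ h).1.symm, (List.cons.injEq _ _ _ _ ▸ h).2⟩
      subst ht'
      have hdjoin : d = A'.flatten ++ B.flatten := by
        rw [← join_append', ← hrest, join_F V hsingle]
      have hIH := ih d hrest
      have htpre : t <+: (a :: s) := (firstTok_spec V hsingle a s).2.1
      obtain ⟨r, hr⟩ := htpre
      have hdr : d = r := by rw [hd, ← hr, List.drop_left]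
      have hpre' : t ++ A'.flatten <+: (a :: s) := by
        refine ⟨B.flatten, ?_⟩
        rw [List.append_assoc, ← hdjoin, hdr, hr]
      have hF : F V (t ++ A'.flatten) = t :: F V A'.flatten :=
        F_append_first V hsingle hpre'
      rw [F_cons, ← ht, ← hd, join_cons', hF, List.cons_append, hIH]
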